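/- Every hedonic game satisfying strong bottom responsiveness and mutuality admits a strong Nash stable partition. -/

import Mathlib

open Finset

abbrev Pref (N : Type*) := N → Finset N → Finset N → Prop

def SPref {N : Type*} (pref : Pref N) (i : N) (S T : Finset N) : Prop :=
  pref i S T ∧ ¬ pref i T S

def IsHedonic {N : Type*} (pref : Pref N) : Prop :=
  (∀ (i : N) (S T : Finset N), i ∈ S → i ∈ T → pref i S T ∨ pref i T S) ∧
  (∀ (i : N) (S T U : Finset N), pref i S T → pref i T U → pref i S U)

section Defs

variable {N : Type*} [DecidableEq N] [Fintype N]

def IsPartition (π : N → Finset N) : Prop :=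
  (∀ i, i ∈ π i) ∧ ∀ i j, j ∈ π i → π j = π i

def Reachable (π π' : N → Finset N) (H : Finset N) : Prop :=
  π' ≠ π ∧ ∀ i j, i ∉ H → j ∉ H → i ≠ j → (π i = π j ↔ π' i = π' j)

def WeaklyBlocks (pref : Pref N) (π : N → Finset N) (S : Finset N) : Prop :=
  (∀ i ∈ S, pref i S (π i)) ∧ ∃ j ∈ S, SPref pref j S (π j)

def StrictCoreStable (pref : Pref N) (π : N → Finset N) : Prop :=
  ∀ S : Finset N, ¬ WeaklyBlocks pref π S

def Blocks (pref : Pref N) (π : N → Finset N) (S : Finset N) : Prop :=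
  S.Nonempty ∧ ∀ i ∈ S, SPref pref i S (π i)

def CoreStable (pref : Pref N) (π : N → Finset N) : Prop :=
  ∀ S : Finset N, ¬ Blocks pref π S

def StrongNashBlocks (pref : Pref N) (π : N → Finset N) (H : Finset N) : Prop :=
  H.Nonempty ∧ ∃ π' : N → Finset N, IsPartition π' ∧ Reachable π π' H ∧
    ∀ i ∈ H, SPref pref i (π' i) (π i)

def StrongNashStable (pref : Pref N) (π : N → Finset N) : Prop :=
  ∀ H : Finset N, ¬ StrongNashBlocks pref π H

def StronglyIndividuallyBlocks (pref : Pref N) (π : N → Finset N) (H : Finset N) : Prop :=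
  H.Nonempty ∧ ∃ π' : N → Finset N, IsPartition π' ∧ Reachable π π' H ∧
    (∀ i ∈ H, SPref pref i (π' i) (π i)) ∧
    ∀ j : N, (∃ i ∈ H, j ∈ π' i) → pref j (π' j) (π j)

def StronglyIndividuallyStable (pref : Pref N) (π : N → Finset N) : Prop :=
  ∀ H : Finset N, ¬ StronglyIndividuallyBlocks pref π H

def WeaklyNashBlocks (pref : Pref N) (π : N → Finset N) (H : Finset N) : Prop :=
  H.Nonempty ∧ ∃ π' : N → Finset N, IsPartition π' ∧ Reachable π π' H ∧
    (∀ i ∈ H, pref i (π' i) (π i)) ∧ ∃ i ∈ H, SPref pref i (π' i) (π i)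

def StrictlyStrongNashStable (pref : Pref N) (π : N → Finset N) : Prop :=
  ∀ H : Finset N, ¬ WeaklyNashBlocks pref π H

def NashStable (pref : Pref N) (π : N → Finset N) : Prop :=
  ∀ (i : N) (T : Finset N), (T = ∅ ∨ ∃ j, π j = T) → i ∉ T →
    ¬ SPref pref i (insert i T) (π i)

def IndividuallyStable (pref : Pref N) (π : N → Finset N) : Prop :=
  ∀ (i : N) (T : Finset N), (T = ∅ ∨ ∃ j, π j = T) → i ∉ T →
    ¬ (SPref pref i (insert i T) (π i) ∧ ∀ j ∈ T, pref j (insert i T) T)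

def ParetoOptimal (pref : Pref N) (π : N → Finset N) : Prop :=
  ∀ π' : N → Finset N, IsPartition π' → (∀ j, pref j (π' j) (π j)) →
    ¬ ∃ i, SPref pref i (π' i) (π i)

def PerfectPartition (pref : Pref N) (π : N → Finset N) : Prop :=
  ∀ (i : N) (S : Finset N), i ∈ S → pref i (π i) S

def ChoiceSets (pref : Pref N) (i : N) (X : Finset N) : Set (Finset N) :=
  {S' | S' ⊆ X ∧ i ∈ S' ∧ ∀ S'' ⊆ X, i ∈ S'' → pref i S' S''}

def TopResponsiveWith (pref : Pref N) (ch : N → Finset N → Finset N) : Prop :=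
  (∀ (i : N) (X : Finset N), i ∈ X → ChoiceSets pref i X = {ch i X}) ∧
  (∀ (i : N) (X Y : Finset N), i ∈ X → i ∈ Y →
      SPref pref i (ch i X) (ch i Y) → SPref pref i X Y) ∧
  (∀ (i : N) (X Y : Finset N), i ∈ X → i ∈ Y →
      ch i X = ch i Y → X ⊂ Y → SPref pref i X Y)

def MutualTop (ch : N → Finset N → Finset N) : Prop :=
  ∀ (i j : N) (X : Finset N), i ∈ X → j ∈ X → (i ∈ ch j X ↔ j ∈ ch i X)

def AvoidSets (pref : Pref N) (i : N) (X : Finset N) : Set (Finset N) :=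
  {S' | S' ⊆ X ∧ i ∈ S' ∧ ∀ S'' ⊆ X, i ∈ S'' → pref i S'' S'}

def BottomResponsive (pref : Pref N) : Prop :=
  (∀ (i : N) (X Y : Finset N), i ∈ X → i ∈ Y →
      (∀ X' ∈ AvoidSets pref i X, ∀ Y' ∈ AvoidSets pref i Y, SPref pref i X' Y') →
      SPref pref i X Y) ∧
  (∀ (i : N) (X Y : Finset N), i ∈ X → i ∈ Y →
      (AvoidSets pref i X ∩ AvoidSets pref i Y).Nonempty → Y.card ≤ X.card → pref i X Y)

def StrongBottomResponsiveWith (pref : Pref N) (av : N → Finset N → Finset N) : Prop :=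
  BottomResponsive pref ∧
    ∀ (i : N) (X : Finset N), i ∈ X → AvoidSets pref i X = {av i X}

def MutualBottom (av : N → Finset N → Finset N) : Prop :=
  ∀ (i j : N) (X : Finset N), i ∈ X → j ∈ X → (i ∈ av j X ↔ j ∈ av i X)

end Defs

section SBRAux

variable {N : Type*} [DecidableEq N] [Fintype N]
variable {pref : Pref N} {av : N → Finset N → Finset N}

/-- A coalition is *clean* if every member's avoid set inside it is their own singleton. -/
def SBRClean (av : N → Finset N → Finset N) (S : Finset N) : Prop :=
  ∀ i ∈ S, av i S = {i}

lemma sbr_pref_refl (hG : IsHedonic pref) {i : N} {S : Finset N} (hi : i ∈ S) :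
    pref i S S := (hG.1 i S S hi hi).elim id id

lemma sbr_av_spec (hAv : ∀ i X, i ∈ X → AvoidSets pref i X = {av i X})
    {i : N} {X : Finset N} (hi : i ∈ X) :
    av i X ⊆ X ∧ i ∈ av i X ∧ ∀ S ⊆ X, i ∈ S → pref i S (av i X) := by
  have : av i X ∈ AvoidSets pref i X := by rw [hAv i X hi]; exact rfl
  exact this

lemma sbr_av_unique (hAv : ∀ i X, i ∈ X → AvoidSets pref i X = {av i X})
    {i : N} {X S : Finset N} (hi : i ∈ X) (hS : S ∈ AvoidSets pref i X) :
    S = av i X := by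
  rw [hAv i X hi] at hS; exact hS

/-- The avoid set is the strict minimum among subcoalitions (uses uniqueness). -/
lemma sbr_spref_av (hG : IsHedonic pref)
    (hAv : ∀ i X, i ∈ X → AvoidSets pref i X = {av i X})
    {i : N} {X S : Finset N} (hi : i ∈ X) (hS : S ⊆ X) (hiS : i ∈ S)
    (hne : S ≠ av i X) : SPref pref i S (av i X) := by
  obtain ⟨hsub, hmem, hall⟩ := sbr_av_spec hAv hi
  have hnotAv : S ∉ AvoidSets pref i X := by
    rw [hAv i X hi]; simpa using hne
  have hnc : ¬ (∀ S'' ⊆ X, i ∈ S'' → pref i S'' S) := fun hc => hnotAv ⟨hS, hiS, hc⟩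
  push_neg at hnc
  obtain ⟨T, hT, hiT, hnp⟩ := hnc
  have h1 : pref i S T := (hG.1 i S T hiS hiT).resolve_right hnp
  have h2 : pref i T (av i X) := hall T hT hiT
  exact ⟨hG.2 i S T (av i X) h1 h2, fun hc => hnp (hG.2 i T (av i X) S h2 hc)⟩

/-- A coalition with avoid set `{i}` is strictly better than one whose avoid set is not `{i}`. -/
lemma sbr_spref_clean (hG : IsHedonic pref)
    (hAv : ∀ i X, i ∈ X → AvoidSets pref i X = {av i X})
    (hBR : BottomResponsive pref)
    {i : N} {X Y : Finset N} (hiX : i ∈ X) (hiY : i ∈ Y)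
    (hX : av i X = {i}) (hY : av i Y ≠ {i}) : SPref pref i X Y := by
  apply hBR.1 i X Y hiX hiY
  intro X' hX' Y' hY'
  rw [hAv i X hiX, Set.mem_singleton_iff] at hX'
  rw [hAv i Y hiY, Set.mem_singleton_iff] at hY'
  subst hX'; subst hY'
  rw [hX]
  exact sbr_spref_av hG hAv hiY (Finset.singleton_subset_iff.2 hiY)
    (Finset.mem_singleton_self i) (fun h => hY h.symm)

lemma sbr_pref_card (hAv : ∀ i X, i ∈ X → AvoidSets pref i X = {av i X})
    (hBR : BottomResponsive pref)
    {i : N} {X Y : Finset N} (hiX : i ∈ X) (hiY : i ∈ Y)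
    (heq : av i X = av i Y) (hc : Y.card ≤ X.card) : pref i X Y := by
  apply hBR.2 i X Y hiX hiY _ hc
  exact ⟨av i X, by rw [hAv i X hiX]; exact rfl,
    by rw [hAv i Y hiY, Set.mem_singleton_iff]; exact heq⟩

lemma sbr_av_subset_eq (hAv : ∀ i X, i ∈ X → AvoidSets pref i X = {av i X})
    {i : N} {X T : Finset N} (hiX : i ∈ X) (hT : T ⊆ X) (hiT : i ∈ T)
    (hsub : av i X ⊆ T) : av i T = av i X := by
  obtain ⟨h1, h2, h3⟩ := sbr_av_spec hAv hiX
  exact (sbr_av_unique hAv hiT ⟨hsub, h2, fun S hS hiS => h3 S (hS.trans hT) hiS⟩).symm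

lemma sbr_clean_subset (hAv : ∀ i X, i ∈ X → AvoidSets pref i X = {av i X})
    {S T : Finset N} (hS : SBRClean av S) (hT : T ⊆ S) : SBRClean av T := by
  intro i hi
  have h1 : av i S = {i} := hS i (hT hi)
  have h2 := sbr_av_subset_eq hAv (hT hi) hT hi
    (by rw [h1]; exact Finset.singleton_subset_iff.2 hi)
  rw [h2, h1]

lemma sbr_clean_singleton (hG : IsHedonic pref)
    (hAv : ∀ i X, i ∈ X → AvoidSets pref i X = {av i X})
    (i : N) : SBRClean av ({i} : Finset N) := by
  intro j hj
  rw [Finset.mem_singleton] at hj; subst hj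
  refine (sbr_av_unique hAv (Finset.mem_singleton_self j) ?_).symm
  refine ⟨subset_rfl, Finset.mem_singleton_self j, ?_⟩
  intro S hS hjS
  have : S = {j} := by
    rcases Finset.subset_singleton_iff.mp hS with h | h
    · subst h; exact absurd hjS (by simp)
    · exact h
  subst this
  exact sbr_pref_refl hG (Finset.mem_singleton_self j)

/-- Construction of the greedy partition into maximum-cardinality clean coalitions. -/
lemma sbr_construct (hG : IsHedonic pref)
    (hAv : ∀ i X, i ∈ X → AvoidSets pref i X = {av i X}) :
    ∃ (π : N → Finset N) (stage : N → ℕ),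
      IsPartition π ∧ (∀ i, SBRClean av (π i)) ∧
      (∀ i j, j ∈ π i → stage j = stage i) ∧
      (∀ i (Y : Finset N), SBRClean av Y → (∀ y ∈ Y, stage i ≤ stage y) →
        Y.card ≤ (π i).card) := by
  classical
  have hpick : ∀ R : Finset N, ∃ S : Finset N, S ⊆ R ∧ SBRClean av S ∧
      (R.Nonempty → S.Nonempty) ∧ ∀ T ⊆ R, SBRClean av T → T.card ≤ S.card := by
    intro R
    have hne : (R.powerset.filter (fun S => SBRClean av S)).Nonempty := by
      refine ⟨∅, Finset.mem_filter.2 ⟨Finset.mem_powerset.2 (Finset.empty_subset R), ?_⟩⟩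
      intro i hi; exact absurd hi (Finset.notMem_empty i)
    obtain ⟨S, hS, hmax⟩ :=
      Finset.exists_max_image (R.powerset.filter (fun S => SBRClean av S)) Finset.card hne
    rw [Finset.mem_filter, Finset.mem_powerset] at hS
    refine ⟨S, hS.1, hS.2, ?_, ?_⟩
    · rintro ⟨x, hx⟩
      have hxm : ({x} : Finset N) ∈ R.powerset.filter (fun S => SBRClean av S) :=
        Finset.mem_filter.2 ⟨Finset.mem_powerset.2 (Finset.singleton_subset_iff.2 hx),
          sbr_clean_singleton hG hAv x⟩
      have := hmax {x} hxm
      rw [Finset.card_singleton] at this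
      exact Finset.card_pos.mp (lt_of_lt_of_le Nat.zero_lt_one this)
    · intro T hT hTc
      exact hmax T (Finset.mem_filter.2 ⟨Finset.mem_powerset.2 hT, hTc⟩)
  choose pick hpsub hpclean hpne hpmax using hpick
  set R : ℕ → Finset N := fun k => Nat.rec Finset.univ (fun _ r => r \ pick r) k with hR
  have hRsucc : ∀ k, R (k + 1) = R k \ pick (R k) := fun k => rfl
  have hRmono : ∀ k m, k ≤ m → R m ⊆ R k := by
    intro k m h
    induction h with
    | refl => exact subset_rfl
    | step _ ih =>
      exact subset_trans (by rw [hRsucc]; exact Finset.sdiff_subset) ih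
  have hdisj : ∀ k m, k < m → ∀ i, i ∈ pick (R k) → i ∉ R m := by
    intro k m hkm i hik him
    have : i ∈ R (k + 1) := hRmono _ _ hkm him
    rw [hRsucc, Finset.mem_sdiff] at this
    exact this.2 hik
  have hterm : ∃ n, R n = ∅ := by
    by_contra hc
    push_neg at hc
    have hdec : ∀ k, (R (k + 1)).card < (R k).card := by
      intro k
      rw [hRsucc]
      exact Finset.card_lt_card
        (Finset.sdiff_ssubset (hpsub (R k)) (hpne (R k) (hc k)))
    have hle : ∀ n, (R n).card + n ≤ (R 0).card := by
      intro n
      induction n with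
      | zero => simp
      | succ n ih => have := hdec n; omega
    have := hle ((R 0).card + 1)
    omega
  have hex : ∀ i : N, ∃ k, i ∈ pick (R k) := by
    intro i
    obtain ⟨n, hn⟩ := hterm
    have hnm : ∃ m, i ∉ R m := ⟨n, by rw [hn]; exact Finset.notMem_empty i⟩
    have h0 : i ∈ R 0 := Finset.mem_univ i
    set m₀ := Nat.find hnm with hm₀
    have hm₀spec : i ∉ R m₀ := Nat.find_spec hnm
    have hm₀pos : m₀ ≠ 0 := by
      intro h; rw [h] at hm₀spec; exact hm₀spec h0
    obtain ⟨k, hk⟩ := Nat.exists_eq_succ_of_ne_zero hm₀pos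
    have hik : i ∈ R k := by
      by_contra hikc
      have h5 : m₀ ≤ k := Nat.find_le hikc
      omega
    refine ⟨k, ?_⟩
    rw [hk, hRsucc, Finset.mem_sdiff] at hm₀spec
    push_neg at hm₀spec
    exact hm₀spec hik
  choose stage hstage using hex
  have hsu : ∀ i k, i ∈ pick (R k) → k = stage i := by
    intro i k hik
    rcases lt_trichotomy k (stage i) with h | h | h
    · exact absurd ((hpsub (R (stage i))) (hstage i)) (hdisj k (stage i) h i hik)
    · exact h
    · exact absurd ((hpsub (R k)) hik) (hdisj (stage i) k h i (hstage i))
  refine ⟨fun i => pick (R (stage i)), stage, ⟨fun i => hstage i, ?_⟩, ?_, ?_, ?_⟩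
  · intro i j hj
    have hji : stage j = stage i := (hsu j (stage i) hj).symm
    show pick (R (stage j)) = pick (R (stage i))
    rw [hji]
  · intro i; exact hpclean (R (stage i))
  · intro i j hj; exact (hsu j (stage i) hj).symm
  · intro i Y hY hst
    refine hpmax (R (stage i)) Y ?_ hY
    intro y hy
    exact hRmono (stage i) (stage y) (hst y hy) ((hpsub (R (stage y))) (hstage y))

/-- The greedy clean partition is strong Nash stable. -/
lemma sbr_stable (hG : IsHedonic pref)
    (hAv : ∀ i X, i ∈ X → AvoidSets pref i X = {av i X})
    (hBR : BottomResponsive pref) (hMut : MutualBottom av)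
    (π : N → Finset N) (stage : N → ℕ)
    (hpart : IsPartition π) (hclean : ∀ i, SBRClean av (π i))
    (hstage1 : ∀ i j, j ∈ π i → stage j = stage i)
    (hmax : ∀ i (Y : Finset N), SBRClean av Y → (∀ y ∈ Y, stage i ≤ stage y) →
      Y.card ≤ (π i).card) :
    StrongNashStable pref π := by
  intro H hblock
  obtain ⟨hHne, π', hpart', ⟨hne', hreach⟩, himp⟩ := hblock
  have hdev : ∀ h ∈ H, av h (π' h) = {h} ∧ (π h).card < (π' h).card := by
    intro h hh
    have hsp := himp h hh
    have hh1 : h ∈ π' h := hpart'.1 h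
    have hh2 : h ∈ π h := hpart.1 h
    have hAvπ : av h (π h) = {h} := hclean h h hh2
    have havY : av h (π' h) = {h} := by
      by_contra hne
      exact hsp.2 (sbr_spref_clean hG hAv hBR hh2 hh1 hAvπ hne).1
    refine ⟨havY, ?_⟩
    by_contra hle
    push_neg at hle
    exact hsp.2 (sbr_pref_card hAv hBR hh2 hh1 (hAvπ.trans havY.symm) hle)
  have hcleanY : ∀ h ∈ H, SBRClean av (π' h) := by
    intro h hh y hy
    by_cases hyH : y ∈ H
    · have heq : π' y = π' h := hpart'.2 h y hy
      rw [← heq]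
      exact (hdev y hyH).1
    · have hyY : y ∈ π' h := hy
      have hsub : av y (π' h) ⊆ π' h \ H := by
        intro z hz
        have hzY : z ∈ π' h := (sbr_av_spec hAv hyY).1 hz
        rw [Finset.mem_sdiff]
        refine ⟨hzY, fun hzH => ?_⟩
        have hz' : π' z = π' h := hpart'.2 h z hzY
        have havz : av z (π' h) = {z} := by
          have := (hdev z hzH).1; rw [hz'] at this; exact this
        have hy' : y ∈ av z (π' h) := (hMut y z (π' h) hyY hzY).mpr hz
        rw [havz, Finset.mem_singleton] at hy'
        exact hyH (hy' ▸ hzH)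
      have hDsub : π' h \ H ⊆ π y := by
        intro j hj
        rw [Finset.mem_sdiff] at hj
        obtain ⟨hjY, hjH⟩ := hj
        by_cases hji : j = y
        · subst hji; exact hpart.1 j
        · have h1 : π' j = π' y := (hpart'.2 h j hjY).trans (hpart'.2 h y hyY).symm
          have h2 : π j = π y := (hreach j y hjH hyH hji).mpr h1
          rw [← h2]; exact hpart.1 j
      have hyD : y ∈ π' h \ H := Finset.mem_sdiff.2 ⟨hyY, hyH⟩
      have heq : av y (π' h \ H) = av y (π' h) :=
        sbr_av_subset_eq hAv hyY Finset.sdiff_subset hyD hsub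
      have hcl : av y (π' h \ H) = {y} :=
        sbr_clean_subset hAv (hclean y) hDsub y hyD
      rw [← heq]; exact hcl
  obtain ⟨h₀, hh₀, hmin⟩ := Finset.exists_min_image H stage hHne
  by_cases hP : ∃ j, j ∉ H ∧ (∃ h ∈ H, j ∈ π' h) ∧ stage j < stage h₀
  · obtain ⟨j₀, hj₀H, ⟨h₁, hh₁, hj₀Y⟩, hst⟩ := hP
    have hYeq : π' j₀ = π' h₁ := hpart'.2 h₁ j₀ hj₀Y
    have hCH : ∀ c ∈ π j₀, c ∉ H := by
      intro c hc hcH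
      have h1 : stage c = stage j₀ := hstage1 j₀ c hc
      have h2 := hmin c hcH
      omega
    have hCY : π j₀ ⊆ π' h₁ := by
      intro c hc
      by_cases hcj : c = j₀
      · subst hcj; rw [← hYeq]; exact hpart'.1 c
      · have h2 : π c = π j₀ := hpart.2 j₀ c hc
        have h3 : π' c = π' j₀ := (hreach c j₀ (hCH c hc) hj₀H hcj).mp h2
        rw [← hYeq, ← h3]; exact hpart'.1 c
    have hstY : ∀ y ∈ π' h₁, stage j₀ ≤ stage y := by
      intro y hy
      by_cases hyH : y ∈ H
      · have := hmin y hyH; omega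
      · by_cases hyj : y = j₀
        · subst hyj; exact le_refl _
        · have h1 : π' y = π' j₀ := (hpart'.2 h₁ y hy).trans hYeq.symm
          have h2 : π y = π j₀ := (hreach y j₀ hyH hj₀H hyj).mpr h1
          have h3 : stage y = stage j₀ := hstage1 j₀ y (h2 ▸ hpart.1 y)
          omega
    have hcard := hmax j₀ (π' h₁) (hcleanY h₁ hh₁) hstY
    have hssub : π j₀ ⊂ π' h₁ :=
      (Finset.ssubset_iff_of_subset hCY).mpr
        ⟨h₁, hpart'.1 h₁, fun hcon => hCH h₁ hcon hh₁⟩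
    exact absurd hcard (not_le.2 (Finset.card_lt_card hssub))
  · push_neg at hP
    have hstY : ∀ y ∈ π' h₀, stage h₀ ≤ stage y := by
      intro y hy
      by_cases hyH : y ∈ H
      · exact hmin y hyH
      · exact hP y hyH ⟨h₀, hh₀, hy⟩
    have hcard := hmax h₀ (π' h₀) (hcleanY h₀ hh₀) hstY
    exact absurd hcard (not_le.2 (hdev h₀ hh₀).2)

end SBRAux

/-- Every hedonic game satisfying strong bottom responsiveness and mutuality admits a
strong Nash stable partition. -/
theorem strongBottomResponsive_mutual_SNS {N : Type*} [DecidableEq N] [Fintype N]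
    (pref : Pref N) (hG : IsHedonic pref)
    (h : ∃ av : N → Finset N → Finset N,
      StrongBottomResponsiveWith pref av ∧ MutualBottom av) :
    ∃ π : N → Finset N, IsPartition π ∧ StrongNashStable pref π := by
  obtain ⟨av, ⟨hBR, hAv⟩, hMut⟩ := h
  obtain ⟨π, stage, hpart, hclean, hstage1, hmax⟩ := sbr_construct hG hAv
  exact ⟨π, hpart, sbr_stable hG hAv hBR hMut π stage hpart hclean hstage1 hmax⟩
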